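/- Let (G,λ) be a temporal graph with lifetime T, Δ ≤ T, and 2 ≤ t ≤ T−Δ+1. For vertex subsets A_1,…,A_Δ ⊆ V, let f(t; A_1,…,A_Δ) denote the minimum cardinality of a sliding Δ-window temporal vertex cover S of (G,λ)|_{[1,t+Δ−1]} satisfying S_{t+i−1} = A_i for i = 1,…,Δ (and f = ∞ if none exists). If ⋃_{i=1}^{Δ}(A_i, t+i−1) is a temporal vertex cover of (G,λ)|_{[t,t+Δ−1]}, then f(t; A_1,…,A_Δ) = |A_Δ| + min over X ⊆ V of f(t−1; X, A_1,…,A_{Δ−1}) (with the convention that the minimum is ∞ if all values are ∞, and ∞ + c = ∞). -/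

import Mathlib

open scoped ENNReal

/-- `fval G lab Δ t A` is the minimum cardinality (in `ℕ∞`) of a sliding `Δ`-window
temporal vertex cover `S` of `(G,λ)|_{[1,t+Δ-1]}` whose vertex appearances at the time
slots `t+i-1` (for `i = 1,…,Δ`) are exactly `(A i, t+i-1)`; it is `⊤ = ∞` if no such
cover exists. -/
noncomputable def fval {V : Type*} [Fintype V] [DecidableEq V] (G : SimpleGraph V)
    (lab : Sym2 V → Finset ℕ) (Δ : ℕ) (t : ℕ) (A : ℕ → Finset V) : ℕ∞ :=
  sInf {n : ℕ∞ | ∃ S : Finset (V × ℕ),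
    (∀ p ∈ S, p.2 ∈ Finset.Icc 1 (t + Δ - 1)) ∧
    (∀ q, 1 ≤ q → q ≤ t → ∀ e ∈ G.edgeSet,
      (lab e ∩ Finset.Icc q (q + Δ - 1)).Nonempty →
      ∃ p ∈ S, p.1 ∈ e ∧ p.2 ∈ lab e ∧ p.2 ∈ Finset.Icc q (q + Δ - 1)) ∧
    (∀ i ∈ Finset.Icc 1 Δ,
      S.filter (fun p => p.2 = t + i - 1) = (A i).image (fun v => (v, t + i - 1))) ∧
    (S.card : ℕ∞) = n}

section Aux

variable {V : Type*} [Fintype V] [DecidableEq V] (G : SimpleGraph V)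
    (lab : Sym2 V → Finset ℕ) (Δ t : ℕ) (A : ℕ → Finset V)

lemma fval_le_aux (S : Finset (V × ℕ))
    (h1 : ∀ p ∈ S, p.2 ∈ Finset.Icc 1 (t + Δ - 1))
    (h2 : ∀ q, 1 ≤ q → q ≤ t → ∀ e ∈ G.edgeSet,
      (lab e ∩ Finset.Icc q (q + Δ - 1)).Nonempty →
      ∃ p ∈ S, p.1 ∈ e ∧ p.2 ∈ lab e ∧ p.2 ∈ Finset.Icc q (q + Δ - 1))
    (h3 : ∀ i ∈ Finset.Icc 1 Δ,
      S.filter (fun p => p.2 = t + i - 1) = (A i).image (fun v => (v, t + i - 1))) :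
    fval G lab Δ t A ≤ (S.card : ℕ∞) := by
  unfold fval
  exact sInf_le ⟨S, h1, h2, h3, rfl⟩

lemma le_fval_aux (x : ℕ∞)
    (h : ∀ S : Finset (V × ℕ),
      (∀ p ∈ S, p.2 ∈ Finset.Icc 1 (t + Δ - 1)) →
      (∀ q, 1 ≤ q → q ≤ t → ∀ e ∈ G.edgeSet,
        (lab e ∩ Finset.Icc q (q + Δ - 1)).Nonempty →
        ∃ p ∈ S, p.1 ∈ e ∧ p.2 ∈ lab e ∧ p.2 ∈ Finset.Icc q (q + Δ - 1)) →
      (∀ i ∈ Finset.Icc 1 Δ,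
        S.filter (fun p => p.2 = t + i - 1) = (A i).image (fun v => (v, t + i - 1))) →
      x ≤ (S.card : ℕ∞)) :
    x ≤ fval G lab Δ t A := by
  unfold fval
  apply le_sInf
  rintro n ⟨S, h1, h2, h3, rfl⟩
  exact h S h1 h2 h3

lemma fval_mem_aux (h : fval G lab Δ t A ≠ ⊤) :
    ∃ S : Finset (V × ℕ),
      (∀ p ∈ S, p.2 ∈ Finset.Icc 1 (t + Δ - 1)) ∧
      (∀ q, 1 ≤ q → q ≤ t → ∀ e ∈ G.edgeSet,
        (lab e ∩ Finset.Icc q (q + Δ - 1)).Nonempty →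
        ∃ p ∈ S, p.1 ∈ e ∧ p.2 ∈ lab e ∧ p.2 ∈ Finset.Icc q (q + Δ - 1)) ∧
      (∀ i ∈ Finset.Icc 1 Δ,
        S.filter (fun p => p.2 = t + i - 1) = (A i).image (fun v => (v, t + i - 1))) ∧
      (S.card : ℕ∞) = fval G lab Δ t A := by
  unfold fval at h ⊢
  set s := {n : ℕ∞ | ∃ S : Finset (V × ℕ),
    (∀ p ∈ S, p.2 ∈ Finset.Icc 1 (t + Δ - 1)) ∧
    (∀ q, 1 ≤ q → q ≤ t → ∀ e ∈ G.edgeSet,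
      (lab e ∩ Finset.Icc q (q + Δ - 1)).Nonempty →
      ∃ p ∈ S, p.1 ∈ e ∧ p.2 ∈ lab e ∧ p.2 ∈ Finset.Icc q (q + Δ - 1)) ∧
    (∀ i ∈ Finset.Icc 1 Δ,
      S.filter (fun p => p.2 = t + i - 1) = (A i).image (fun v => (v, t + i - 1))) ∧
    (S.card : ℕ∞) = n} with hs
  have hne : s.Nonempty := by
    by_contra hcon
    rw [Set.not_nonempty_iff_eq_empty] at hcon
    rw [hcon, sInf_empty] at h
    exact h rfl
  obtain ⟨S, h1, h2, h3, hcard⟩ := csInf_mem hne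
  exact ⟨S, h1, h2, h3, hcard⟩

/-- Restriction: from a cover witnessing `fval` at time `t`, strip the last layer. -/
lemma restr_aux (hΔ1 : 1 ≤ Δ) (ht2 : 2 ≤ t) (S : Finset (V × ℕ))
    (h1 : ∀ p ∈ S, p.2 ∈ Finset.Icc 1 (t + Δ - 1))
    (h2 : ∀ q, 1 ≤ q → q ≤ t → ∀ e ∈ G.edgeSet,
      (lab e ∩ Finset.Icc q (q + Δ - 1)).Nonempty →
      ∃ p ∈ S, p.1 ∈ e ∧ p.2 ∈ lab e ∧ p.2 ∈ Finset.Icc q (q + Δ - 1))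
    (h3 : ∀ i ∈ Finset.Icc 1 Δ,
      S.filter (fun p => p.2 = t + i - 1) = (A i).image (fun v => (v, t + i - 1))) :
    ∃ (X : Finset V) (S' : Finset (V × ℕ)),
      (∀ p ∈ S', p.2 ∈ Finset.Icc 1 (t - 1 + Δ - 1)) ∧
      (∀ q, 1 ≤ q → q ≤ t - 1 → ∀ e ∈ G.edgeSet,
        (lab e ∩ Finset.Icc q (q + Δ - 1)).Nonempty →
        ∃ p ∈ S', p.1 ∈ e ∧ p.2 ∈ lab e ∧ p.2 ∈ Finset.Icc q (q + Δ - 1)) ∧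
      (∀ i ∈ Finset.Icc 1 Δ,
        S'.filter (fun p => p.2 = t - 1 + i - 1) =
          (if i = 1 then X else A (i - 1)).image (fun v => (v, t - 1 + i - 1))) ∧
      S.card = S'.card + (A Δ).card := by
  classical
  refine ⟨(S.filter (fun p => p.2 = t - 1)).image Prod.fst,
    S.filter (fun p => ¬ (p.2 = t + Δ - 1)), ?_, ?_, ?_, ?_⟩
  · intro p hp
    rw [Finset.mem_filter] at hp
    have := h1 p hp.1
    rw [Finset.mem_Icc] at this ⊢
    have hne := hp.2
    omega
  · intro q hq1 hq2 e he hne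
    obtain ⟨p, hpS, hpe, hplab, hpIcc⟩ := h2 q hq1 (by omega) e he hne
    refine ⟨p, ?_, hpe, hplab, hpIcc⟩
    rw [Finset.mem_filter]
    rw [Finset.mem_Icc] at hpIcc
    exact ⟨hpS, by omega⟩
  · intro i hi
    rw [Finset.mem_Icc] at hi
    by_cases hi1 : i = 1
    · subst hi1
      rw [if_pos rfl]
      have hkey : t - 1 + 1 - 1 = t - 1 := by omega
      simp only [hkey]
      have e1 : (S.filter (fun p => ¬ (p.2 = t + Δ - 1))).filter (fun p => p.2 = t - 1)
          = S.filter (fun p => p.2 = t - 1) := by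
        rw [Finset.filter_filter]
        apply Finset.filter_congr
        intro x _
        constructor
        · exact fun h => h.2
        · exact fun h => ⟨by omega, h⟩
      rw [e1]
      ext ⟨v, s⟩
      simp only [Finset.mem_filter, Finset.mem_image, Prod.exists]
      constructor
      · rintro ⟨hS, hs⟩
        exact ⟨v, ⟨v, s, ⟨hS, hs⟩, rfl⟩, by rw [hs]⟩
      · rintro ⟨a, ⟨a1, b, ⟨hS, hb⟩, ha1⟩, heq⟩
        rw [Prod.mk.injEq] at heq
        obtain ⟨rfl, rfl⟩ := heq
        subst ha1
        subst hb
        exact ⟨hS, rfl⟩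
    · simp only [if_neg hi1]
      have hkey : t - 1 + i - 1 = t + (i - 1) - 1 := by omega
      simp only [hkey]
      have e1 : (S.filter (fun p => ¬ (p.2 = t + Δ - 1))).filter (fun p => p.2 = t + (i - 1) - 1)
          = S.filter (fun p => p.2 = t + (i - 1) - 1) := by
        rw [Finset.filter_filter]
        apply Finset.filter_congr
        intro x _
        constructor
        · exact fun h => h.2
        · exact fun h => ⟨by omega, h⟩
      rw [e1]
      exact h3 (i - 1) (by rw [Finset.mem_Icc]; omega)
  · have hsplit : (S.filter (fun p => p.2 = t + Δ - 1)).card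
        + (S.filter (fun p => ¬ (p.2 = t + Δ - 1))).card = S.card :=
      Finset.card_filter_add_card_filter_not (fun p : V × ℕ => p.2 = t + Δ - 1)
    have h3Δ := h3 Δ (by rw [Finset.mem_Icc]; omega)
    have hcard : (S.filter (fun p => p.2 = t + Δ - 1)).card = (A Δ).card := by
      rw [h3Δ]
      exact Finset.card_image_of_injective _ (fun a b h => by simpa using h)
    omega

/-- Extension: from a cover witnessing `fval` at time `t-1`, add the layer `(A Δ, t+Δ-1)`. -/
lemma extend_aux (hΔ1 : 1 ≤ Δ) (ht2 : 2 ≤ t)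
    (hcov : ∀ e ∈ G.edgeSet, (lab e ∩ Finset.Icc t (t + Δ - 1)).Nonempty →
        ∃ i ∈ Finset.Icc 1 Δ, ∃ v ∈ A i, v ∈ e ∧ (t + i - 1) ∈ lab e)
    (X : Finset V) (S' : Finset (V × ℕ))
    (h1' : ∀ p ∈ S', p.2 ∈ Finset.Icc 1 (t - 1 + Δ - 1))
    (h2' : ∀ q, 1 ≤ q → q ≤ t - 1 → ∀ e ∈ G.edgeSet,
      (lab e ∩ Finset.Icc q (q + Δ - 1)).Nonempty →
      ∃ p ∈ S', p.1 ∈ e ∧ p.2 ∈ lab e ∧ p.2 ∈ Finset.Icc q (q + Δ - 1))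
    (h3' : ∀ i ∈ Finset.Icc 1 Δ,
      S'.filter (fun p => p.2 = t - 1 + i - 1) =
        (if i = 1 then X else A (i - 1)).image (fun v => (v, t - 1 + i - 1))) :
    ∃ S : Finset (V × ℕ),
      (∀ p ∈ S, p.2 ∈ Finset.Icc 1 (t + Δ - 1)) ∧
      (∀ q, 1 ≤ q → q ≤ t → ∀ e ∈ G.edgeSet,
        (lab e ∩ Finset.Icc q (q + Δ - 1)).Nonempty →
        ∃ p ∈ S, p.1 ∈ e ∧ p.2 ∈ lab e ∧ p.2 ∈ Finset.Icc q (q + Δ - 1)) ∧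
      (∀ i ∈ Finset.Icc 1 Δ,
        S.filter (fun p => p.2 = t + i - 1) = (A i).image (fun v => (v, t + i - 1))) ∧
      S.card = S'.card + (A Δ).card := by
  classical
  -- key: membership in S' at times t+i-1, 1 ≤ i ≤ Δ-1
  have hmemS' : ∀ i, 1 ≤ i → i ≤ Δ - 1 →
      S'.filter (fun p => p.2 = t + i - 1) = (A i).image (fun v => (v, t + i - 1)) := by
    intro i hi1 hi2
    have h3i := h3' (i + 1) (by rw [Finset.mem_Icc]; omega)
    rw [if_neg (by omega : ¬ (i + 1 = 1))] at h3i
    have hkey : t - 1 + (i + 1) - 1 = t + i - 1 := by omega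
    have hkey2 : i + 1 - 1 = i := by omega
    simp only [hkey, hkey2] at h3i
    exact h3i
  refine ⟨S' ∪ (A Δ).image (fun v => (v, t + Δ - 1)), ?_, ?_, ?_, ?_⟩
  · intro p hp
    rw [Finset.mem_union] at hp
    rcases hp with hp | hp
    · have := h1' p hp
      rw [Finset.mem_Icc] at this ⊢
      omega
    · rw [Finset.mem_image] at hp
      obtain ⟨v, _, rfl⟩ := hp
      rw [Finset.mem_Icc]
      omega
  · intro q hq1 hq2 e he hne
    by_cases hqt : q = t
    · rw [hqt] at hne ⊢
      obtain ⟨i, hi, v, hv, hve, hlab⟩ := hcov e he hne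
      rw [Finset.mem_Icc] at hi
      by_cases hiΔ : i = Δ
      · rw [hiΔ] at hv hlab
        refine ⟨(v, t + Δ - 1), ?_, hve, hlab, ?_⟩
        · exact Finset.mem_union_right _ (Finset.mem_image_of_mem _ hv)
        · rw [Finset.mem_Icc]; omega
      · have hmem : (v, t + i - 1) ∈ S' := by
          have : (v, t + i - 1) ∈ S'.filter (fun p => p.2 = t + i - 1) := by
            rw [hmemS' i hi.1 (by omega)]
            exact Finset.mem_image_of_mem _ hv
          exact Finset.mem_of_mem_filter _ this
        refine ⟨(v, t + i - 1), Finset.mem_union_left _ hmem, hve, hlab, ?_⟩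
        rw [Finset.mem_Icc]; omega
    · obtain ⟨p, hpS, hpe, hplab, hpIcc⟩ := h2' q hq1 (by omega) e he hne
      exact ⟨p, Finset.mem_union_left _ hpS, hpe, hplab, hpIcc⟩
  · intro i hi
    rw [Finset.mem_Icc] at hi
    rw [Finset.filter_union]
    by_cases hiΔ : i = Δ
    · rw [hiΔ]
      have e1 : S'.filter (fun p => p.2 = t + Δ - 1) = ∅ := by
        apply Finset.filter_false_of_mem
        intro p hp
        have := h1' p hp
        rw [Finset.mem_Icc] at this
        omega
      have e2 : ((A Δ).image (fun v => (v, t + Δ - 1))).filter (fun p => p.2 = t + Δ - 1)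
          = (A Δ).image (fun v => (v, t + Δ - 1)) := by
        apply Finset.filter_true_of_mem
        intro p hp
        rw [Finset.mem_image] at hp
        obtain ⟨v, _, rfl⟩ := hp
        rfl
      rw [e1, e2, Finset.empty_union]
    · have e1 : ((A Δ).image (fun v => (v, t + Δ - 1))).filter (fun p => p.2 = t + i - 1)
          = ∅ := by
        apply Finset.filter_false_of_mem
        intro p hp
        rw [Finset.mem_image] at hp
        obtain ⟨v, _, rfl⟩ := hp
        simp only
        omega
      rw [e1, Finset.union_empty]
      exact hmemS' i hi.1 (by omega)
  · rw [Finset.card_union_of_disjoint, Finset.card_image_of_injective _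
      (fun a b h => by simpa using h : Function.Injective (fun v : V => (v, t + Δ - 1)))]
    rw [Finset.disjoint_left]
    intro p hp hp'
    rw [Finset.mem_image] at hp'
    obtain ⟨v, _, rfl⟩ := hp'
    have := h1' _ hp
    rw [Finset.mem_Icc] at this
    omega

end Aux

/-- The dynamic-programming recursion: if `⋃_{i=1}^{Δ} (A i, t+i-1)` is a temporal
vertex cover of `(G,λ)|_{[t,t+Δ-1]}` and `2 ≤ t ≤ T-Δ+1`, then
`f(t; A_1,…,A_Δ) = |A_Δ| + min_{X ⊆ V} f(t-1; X, A_1,…,A_{Δ-1})`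
(in `ℕ∞`, so the minimum is `∞` if all values are `∞`, and `∞ + c = ∞`). -/
theorem stmt18 {V : Type*} [Fintype V] [DecidableEq V] (G : SimpleGraph V)
    (lab : Sym2 V → Finset ℕ) (T Δ t : ℕ)
    (hΔ1 : 1 ≤ Δ) (hΔT : Δ ≤ T) (ht2 : 2 ≤ t) (htT : t ≤ T - Δ + 1)
    (A : ℕ → Finset V)
    (hcov : ∀ e ∈ G.edgeSet, (lab e ∩ Finset.Icc t (t + Δ - 1)).Nonempty →
        ∃ i ∈ Finset.Icc 1 Δ, ∃ v ∈ A i, v ∈ e ∧ (t + i - 1) ∈ lab e) :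
    fval G lab Δ t A = ((A Δ).card : ℕ∞) +
      ⨅ X : Finset V, fval G lab Δ (t - 1) (fun i => if i = 1 then X else A (i - 1)) := by
  classical
  apply le_antisymm
  · -- fval t A ≤ |A Δ| + iInf
    obtain ⟨X0, hX0⟩ := Finite.exists_min
      (fun X : Finset V => fval G lab Δ (t - 1) (fun i => if i = 1 then X else A (i - 1)))
    have hiInf : (⨅ X : Finset V, fval G lab Δ (t - 1) (fun i => if i = 1 then X else A (i - 1)))
        = fval G lab Δ (t - 1) (fun i => if i = 1 then X0 else A (i - 1)) :=
      le_antisymm (iInf_le _ X0) (le_iInf hX0)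
    rw [hiInf]
    by_cases htop : fval G lab Δ (t - 1) (fun i => if i = 1 then X0 else A (i - 1)) = ⊤
    · rw [htop]
      simp
    · obtain ⟨S', h1', h2', h3', hc'⟩ := fval_mem_aux G lab Δ (t - 1) _ htop
      obtain ⟨S, h1, h2, h3, hScard⟩ :=
        extend_aux G lab Δ t A hΔ1 ht2 hcov X0 S' h1' h2' h3'
      calc fval G lab Δ t A ≤ (S.card : ℕ∞) := fval_le_aux G lab Δ t A S h1 h2 h3
        _ = ((A Δ).card : ℕ∞) + (S'.card : ℕ∞) := by
            rw [hScard]; push_cast; ring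
        _ = _ := by rw [hc']
  · -- |A Δ| + iInf ≤ fval t A
    apply le_fval_aux
    intro S h1 h2 h3
    obtain ⟨X, S', h1', h2', h3', hcard⟩ := restr_aux G lab Δ t A hΔ1 ht2 S h1 h2 h3
    have hle : fval G lab Δ (t - 1) (fun i => if i = 1 then X else A (i - 1))
        ≤ (S'.card : ℕ∞) :=
      fval_le_aux G lab Δ (t - 1) _ S' h1' h2' h3'
    calc ((A Δ).card : ℕ∞) +
          (⨅ X : Finset V, fval G lab Δ (t - 1) (fun i => if i = 1 then X else A (i - 1)))
        ≤ ((A Δ).card : ℕ∞)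
            + fval G lab Δ (t - 1) (fun i => if i = 1 then X else A (i - 1)) :=
          add_le_add le_rfl (iInf_le _ X)
      _ ≤ ((A Δ).card : ℕ∞) + (S'.card : ℕ∞) := add_le_add le_rfl hle
      _ = (S.card : ℕ∞) := by rw [hcard]; push_cast; ring
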